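/- Under the hypotheses of Proposition 2 (with ψ ≡ 0), for every t the pointwise power inequality ẋ₁(t)ᵀF₁(t) + v₂(t)ᵀF_null(t) ≥ Ḣ₁(t) + Ṫ(t) + Ḣ₂(t) holds, where H₁(t) = ½ẋ₁(t)ᵀM(t)ẋ₁(t), T(t) = ½x_t(t)², H₂(t) = ½v₂(t)ᵀv₂(t), and Ḣ₁, Ṫ, Ḣ₂ are their derivatives. That is: if M(t)ẍ₁ + D(t)ẋ₁ = F₁ with M(t) symmetric positive definite and differentiable, D(t) symmetric positive semidefinite; v̇₂ = −D_N(t)v₂ + F_null with D_N(t) symmetric positive semidefinite; x_t·ẋ_t = φ(t)(ẋ₁ᵀDẋ₁ + v₂ᵀD_Nv₂) − γ(t)·½ẋ₁ᵀṀẋ₁; φ(t) ∈ {0,1}; and for every t either γ(t) = 1 or (γ(t) = 0 and Ṁ(t) is negative semidefinite); then ẋ₁(t)ᵀF₁(t) + v₂(t)ᵀF_null(t) ≥ Ḣ₁(t) + Ṫ(t) + Ḣ₂(t). -/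

import Mathlib

open Matrix

lemma quad_hasDerivAt {n : ℕ} (u w : ℝ → Fin n → ℝ) (u' w' : Fin n → ℝ)
    (A : ℝ → Matrix (Fin n) (Fin n) ℝ) (A' : Matrix (Fin n) (Fin n) ℝ) (t : ℝ)
    (hu : ∀ i, HasDerivAt (fun s => u s i) (u' i) t)
    (hw : ∀ i, HasDerivAt (fun s => w s i) (w' i) t)
    (hA : ∀ i j, HasDerivAt (fun s => A s i j) (A' i j) t) :
    HasDerivAt (fun s => u s ⬝ᵥ (A s).mulVec (w s))
      (u' ⬝ᵥ (A t).mulVec (w t) + u t ⬝ᵥ A'.mulVec (w t) + u t ⬝ᵥ (A t).mulVec w') t := by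
  have key : HasDerivAt (fun s => ∑ i, ∑ j, u s i * (A s i j * w s j))
      (∑ i, ∑ j, (u' i * (A t i j * w t j) +
        u t i * (A' i j * w t j + A t i j * w' j))) t := by
    apply HasDerivAt.fun_sum
    intro i _
    apply HasDerivAt.fun_sum
    intro j _
    exact (hu i).mul ((hA i j).mul (hw j))
  have e1 : (fun s => u s ⬝ᵥ (A s).mulVec (w s)) =
      (fun s => ∑ i, ∑ j, u s i * (A s i j * w s j)) := by
    funext s
    simp [dotProduct, mulVec, Finset.mul_sum]
  rw [e1]
  convert key using 1
  simp [dotProduct, mulVec, Finset.mul_sum, Finset.sum_add_distrib, mul_add]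
  ring

lemma symm_swap {n : ℕ} {A : Matrix (Fin n) (Fin n) ℝ} (hA : A.IsHermitian)
    (x y : Fin n → ℝ) : x ⬝ᵥ A.mulVec y = y ⬝ᵥ A.mulVec x := by
  rw [Matrix.dotProduct_mulVec, ← Matrix.mulVec_transpose]
  have : Aᵀ = A := by
    have := hA; rwa [Matrix.IsHermitian, Matrix.conjTranspose] at this
    
  rw [this, dotProduct_comm]

/-- Equation (28) in the proof of Proposition 2: the pointwise power inequality
`ẋ₁ᵀF₁ + v₂ᵀF_null ≥ Ḣ₁ + Ṫ + Ḣ₂`. -/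
theorem pointwise_power_inequality
    (m₁ m₂ : ℕ) (hm₁ : 0 < m₁) (hm₂ : 0 < m₂)
    (x1' x1'' F₁ : ℝ → Fin m₁ → ℝ)
    (v₂ v₂' Fnull : ℝ → Fin m₂ → ℝ)
    (xt xt' : ℝ → ℝ)
    (M M' D : ℝ → Matrix (Fin m₁) (Fin m₁) ℝ)
    (DN : ℝ → Matrix (Fin m₂) (Fin m₂) ℝ)
    (φ γ : ℝ → ℝ)
    (hx1 : ∀ t, HasDerivAt x1' (x1'' t) t)
    (hv2 : ∀ t, HasDerivAt v₂ (v₂' t) t)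
    (hxt : ∀ t, HasDerivAt xt (xt' t) t)
    (hM : ∀ t i j, HasDerivAt (fun s => M s i j) (M' t i j) t)
    (hMpd : ∀ t, (M t).PosDef)
    (hDpsd : ∀ t, (D t).PosSemidef)
    (hDNpsd : ∀ t, (DN t).PosSemidef)
    (hdyn1 : ∀ t, (M t).mulVec (x1'' t) + (D t).mulVec (x1' t) = F₁ t)
    (hdyn2 : ∀ t, v₂' t = -(DN t).mulVec (v₂ t) + Fnull t)
    (htank : ∀ t, xt t * xt' t =
      φ t * ((x1' t ⬝ᵥ (D t).mulVec (x1' t)) + (v₂ t ⬝ᵥ (DN t).mulVec (v₂ t))) -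
        γ t * ((1 : ℝ) / 2 * (x1' t ⬝ᵥ (M' t).mulVec (x1' t))))
    (hφ : ∀ t, φ t = 0 ∨ φ t = 1)
    (hγ : ∀ t, γ t = 1 ∨ (γ t = 0 ∧ (-(M' t)).PosSemidef)) :
    ∀ t, x1' t ⬝ᵥ F₁ t + v₂ t ⬝ᵥ Fnull t ≥
      deriv (fun s => (1 : ℝ) / 2 * (x1' s ⬝ᵥ (M s).mulVec (x1' s))) t +
      deriv (fun s => (1 : ℝ) / 2 * (xt s) ^ 2) t +
      deriv (fun s => (1 : ℝ) / 2 * (v₂ s ⬝ᵥ v₂ s)) t := by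
  intro t
  have hx1c : ∀ i, HasDerivAt (fun s => x1' s i) (x1'' t i) t :=
    fun i => hasDerivAt_pi.mp (hx1 t) i
  have hv2c : ∀ i, HasDerivAt (fun s => v₂ s i) (v₂' t i) t :=
    fun i => hasDerivAt_pi.mp (hv2 t) i
  -- H1 derivative
  have hH1 : deriv (fun s => (1 : ℝ) / 2 * (x1' s ⬝ᵥ (M s).mulVec (x1' s))) t =
      (1 : ℝ) / 2 * (x1'' t ⬝ᵥ (M t).mulVec (x1' t) + x1' t ⬝ᵥ (M' t).mulVec (x1' t) +
        x1' t ⬝ᵥ (M t).mulVec (x1'' t)) :=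
    ((quad_hasDerivAt x1' x1' (x1'' t) (x1'' t) M (M' t) t hx1c hx1c (hM t)).const_mul
      ((1 : ℝ)/2)).deriv
  -- T derivative
  have hT : deriv (fun s => (1 : ℝ) / 2 * (xt s) ^ 2) t = xt t * xt' t := by
    have h := (((hxt t).fun_pow 2).const_mul ((1 : ℝ)/2)).deriv
    rw [h]; norm_num <;> ring
  -- H2 derivative
  have hH2 : deriv (fun s => (1 : ℝ) / 2 * (v₂ s ⬝ᵥ v₂ s)) t = v₂ t ⬝ᵥ v₂' t := by
    have e : (fun s => (1 : ℝ) / 2 * (v₂ s ⬝ᵥ v₂ s)) =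
        (fun s => (1 : ℝ) / 2 * (v₂ s ⬝ᵥ (1 : Matrix (Fin m₂) (Fin m₂) ℝ).mulVec (v₂ s))) := by
      funext s; rw [Matrix.one_mulVec]
    rw [e]
    have h := ((quad_hasDerivAt v₂ v₂ (v₂' t) (v₂' t) (fun _ => 1) 0 t hv2c hv2c
      (fun i j => hasDerivAt_const t _)).const_mul ((1 : ℝ)/2)).deriv
    rw [h]
    rw [Matrix.one_mulVec, Matrix.zero_mulVec, dotProduct_zero, Matrix.one_mulVec,
      dotProduct_comm (v₂' t)]
    ring
  rw [hH1, hT, hH2, htank t, hdyn2 t]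
  -- simplify using dynamics and symmetry
  have hMx : (M t).mulVec (x1'' t) = F₁ t - (D t).mulVec (x1' t) :=
    eq_sub_of_add_eq (hdyn1 t)
  have hsym := symm_swap (hMpd t).1 (x1'' t) (x1' t)
  rw [hsym, hMx]
  simp only [dotProduct_sub, dotProduct_add, dotProduct_neg]
  have ha : 0 ≤ x1' t ⬝ᵥ (D t).mulVec (x1' t) := by simpa using (hDpsd t).dotProduct_mulVec_nonneg (x1' t)
  have hb : 0 ≤ v₂ t ⬝ᵥ (DN t).mulVec (v₂ t) := by simpa using (hDNpsd t).dotProduct_mulVec_nonneg (v₂ t)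
  rcases hφ t with h | h <;> rcases hγ t with h' | ⟨h', hns⟩ <;>
    [skip; skip; skip; skip] <;>
  · first
    | (simp only [h, h', one_mul, zero_mul, mul_zero, zero_sub, sub_zero]
       try (have hc : x1' t ⬝ᵥ (M' t).mulVec (x1' t) ≤ 0 := by
             have := hns.dotProduct_mulVec_nonneg (x1' t)
             simp only [Matrix.neg_mulVec, dotProduct_neg, star_trivial] at this
             linarith)
       nlinarith [ha, hb])
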